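/- Let A = kQ/I be a finite dimensional algebra and ℓ a bound on the length of nonzero paths in A. Suppose M is a class of indecomposable A-modules such that each M ∈ M has a chosen basis whose coefficient quiver has indegree bounded by d, the class of underlying graphs of these coefficient quivers is fragmentable, and all nonzero paths have length at most ℓ. Then M is a hyperfinite family. -/

import Mathlib

/-- A quiver: vertices, arrows, source and target maps. -/
structure QuiverData where
  Q0 : Type
  Q1 : Type
  src : Q1 → Q0
  tgt : Q1 → Q0

/-- A `k`-linear representation of the quiver `Q`. -/
structure RepOf (k : Type) [Field k] (Q : QuiverData) where
  V : Q.Q0 → Type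
  [acg : ∀ q, AddCommGroup (V q)]
  [mod : ∀ q, Module k (V q)]
  f : ∀ a : Q.Q1, V (Q.src a) →ₗ[k] V (Q.tgt a)

attribute [instance] RepOf.acg RepOf.mod

/-- A subrepresentation: a family of subspaces invariant under all arrow maps. -/
structure SubRep {k : Type} [Field k] {Q : QuiverData} (M : RepOf k Q) where
  U : ∀ q, Submodule k (M.V q)
  inv : ∀ a : Q.Q1, (U (Q.src a)).map (M.f a) ≤ U (Q.tgt a)

/-- A representation is indecomposable if it is nonzero and admits no decomposition into
two componentwise complementary nonzero subrepresentations. -/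
def IsIndec {k : Type} [Field k] {Q : QuiverData} (M : RepOf k Q) : Prop :=
  (∃ q, ∃ x : M.V q, x ≠ 0) ∧
  ∀ U W : SubRep M, (∀ q, IsCompl (U.U q) (W.U q)) →
    (∀ q, U.U q = ⊥) ∨ (∀ q, W.U q = ⊥)

/-- There is an arrow `a` whose matrix entry at `(x, y)` with respect to the basis `B`
is nonzero (an arrow `x → y` in the coefficient quiver). -/
def coeffRelA {k : Type} [Field k] {Q : QuiverData} (M : RepOf k Q) {ι : Q.Q0 → Type}
    (B : ∀ q, Module.Basis (ι q) k (M.V q)) (a : Q.Q1) (x y : Σ q, ι q) : Prop :=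
  ∃ (hx : x.1 = Q.src a) (hy : y.1 = Q.tgt a),
    ((B (Q.tgt a)).repr ((M.f a) ((B (Q.src a)) (hx ▸ x.2)))) (hy ▸ y.2) ≠ 0

/-- There is an arrow `x → y` in the coefficient quiver `Γ(M, B)`. -/
def coeffRel {k : Type} [Field k] {Q : QuiverData} (M : RepOf k Q) {ι : Q.Q0 → Type}
    (B : ∀ q, Module.Basis (ι q) k (M.V q)) (x y : Σ q, ι q) : Prop :=
  ∃ a : Q.Q1, coeffRelA M B a x y

/-- The underlying (simple) graph of the coefficient quiver `Γ(M, B)`. -/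
def coeffGraph {k : Type} [Field k] {Q : QuiverData} (M : RepOf k Q) {ι : Q.Q0 → Type}
    (B : ∀ q, Module.Basis (ι q) k (M.V q)) : SimpleGraph (Σ q, ι q) where
  Adj x y := x ≠ y ∧ (coeffRel M B x y ∨ coeffRel M B y x)
  symm := ⟨by rintro x y ⟨h1, h2⟩; exact ⟨h1.symm, h2.symm⟩⟩
  loopless := ⟨fun x h => h.1 rfl⟩

/-- The total `k`-dimension of a representation. -/
noncomputable def totalDim {k : Type} [Field k] {Q : QuiverData} [Fintype Q.Q0]
    (M : RepOf k Q) : ℕ :=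
  ∑ q, Module.finrank k (M.V q)

/-- The total `k`-dimension of a subrepresentation. -/
noncomputable def subDim {k : Type} [Field k] {Q : QuiverData} [Fintype Q.Q0]
    {M : RepOf k Q} (N : SubRep M) : ℕ :=
  ∑ q, Module.finrank k (N.U q)

/-- The number of non-isolated vertices of a graph. -/
noncomputable def nonIsolated {α : Type} (G : SimpleGraph α) : ℕ :=
  {v : α | ∃ w, G.Adj v w}.ncard

section Helpers

open Submodule Set

/-! ### Generic linear algebra helpers -/

/-- The fiber of a set of sigma-vertices over an index. -/
def sFiber {ι0 : Type} {κ' : ι0 → Type} (S : Set (Σ q, κ' q)) (q : ι0) : Set (κ' q) :=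
  {b | (⟨q, b⟩ : Σ q, κ' q) ∈ S}

lemma finrank_span_basis_image {k W ξ : Type} [Field k] [AddCommGroup W] [Module k W]
    [Fintype ξ] (B : Module.Basis ξ k W) (s : Set ξ) :
    Module.finrank k (Submodule.span k (B '' s)) = s.ncard := by
  classical
  have hli : LinearIndependent k ((↑) : (B '' s) → W) := by
    rw [Set.image_eq_range]
    exact (B.linearIndependent.comp _ Subtype.val_injective).linearIndepOn_id
  haveI : Fintype (B '' s) := Set.Finite.fintype ((Set.toFinite s).image B)
  rw [finrank_span_set_eq_card hli, ← Set.ncard_eq_toFinset_card',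
    Set.ncard_image_of_injective _ B.injective]

lemma isCompl_span_basis {k W ξ : Type} [Field k] [AddCommGroup W] [Module k W]
    (B : Module.Basis ξ k W) (s : Set ξ) :
    IsCompl (Submodule.span k (B '' s)) (Submodule.span k (B '' sᶜ)) :=
  ⟨B.linearIndependent.disjoint_span_image disjoint_compl_right,
   codisjoint_iff.mpr (by
     rw [← Submodule.span_union, ← Set.image_union, Set.union_compl_self, Set.image_univ,
       B.span_eq])⟩

lemma iSupIndep_span_basis {k W ξ : Type} {J : Type} [Field k] [AddCommGroup W] [Module k W]
    (B : Module.Basis ξ k W) (s : J → Set ξ)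
    (hdisj : ∀ j j', j ≠ j' → Disjoint (s j) (s j')) :
    iSupIndep fun j => Submodule.span k (B '' s j) := by
  rw [iSupIndep_def]
  intro j
  have h : (⨆ (j') (_ : j' ≠ j), Submodule.span k (B '' s j'))
      = Submodule.span k (B '' ⋃ (j') (_ : j' ≠ j), s j') := by
    simp only [Set.image_iUnion, Submodule.span_iUnion]
  rw [h]
  refine B.linearIndependent.disjoint_span_image ?_
  exact Set.disjoint_iUnion₂_right.mpr fun j' hj' => hdisj j j' (fun h' => hj' h'.symm)

lemma sum_ncard_fiber {ι0 : Type} [Fintype ι0] {κ' : ι0 → Type} [∀ q, Fintype (κ' q)]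
    (S : Set (Σ q, κ' q)) : ∑ q, (sFiber S q).ncard = S.ncard := by
  classical
  rw [Set.ncard_eq_toFinset_card S (Set.toFinite S)]
  rw [show (Set.toFinite S).toFinset
      = Finset.univ.sigma (fun q => (Set.toFinite (sFiber S q)).toFinset) by
    ext ⟨q, b⟩
    simp only [Set.Finite.mem_toFinset, Finset.mem_sigma, Finset.mem_univ, true_and]
    exact Iff.rfl]
  rw [Finset.card_sigma]
  exact Finset.sum_congr rfl fun q _ =>
    (Set.ncard_eq_toFinset_card (sFiber S q) (Set.toFinite _))

lemma ncard_biUnion_le' {α β : Type} {t : Set α} (ht : t.Finite) (F : α → Set β)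
    (d : ℕ) (hd : ∀ a, (F a).ncard ≤ d) :
    (⋃ a ∈ t, F a).ncard ≤ d * t.ncard := by
  refine Set.Finite.induction_on
    (motive := fun t _ => (⋃ a ∈ t, F a).ncard ≤ d * t.ncard) t ht (by simp) ?_
  intro a s ha hs ih
  · rw [Set.biUnion_insert]
    calc (F a ∪ ⋃ x ∈ s, F x).ncard ≤ (F a).ncard + (⋃ x ∈ s, F x).ncard :=
          Set.ncard_union_le _ _
      _ ≤ d + d * s.ncard := Nat.add_le_add (hd a) ih
      _ = d * (insert a s).ncard := by
          rw [Set.ncard_insert_of_notMem ha hs]; ring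

/-! ### Spans of closed sets of basis vectors are subrepresentations -/

/-- The span of a set of basis vectors that is closed under the coefficient-quiver
relation is a subrepresentation. -/
def spanRep {k : Type} [Field k] {Q : QuiverData} {M : RepOf k Q} {ι : Q.Q0 → Type}
    (B : ∀ q, Module.Basis (ι q) k (M.V q)) (S : Set (Σ q, ι q))
    (hS : ∀ x ∈ S, ∀ y, coeffRel M B x y → y ∈ S) : SubRep M where
  U q := Submodule.span k (B q '' sFiber S q)
  inv a := by
    rw [Submodule.map_span, Submodule.span_le]
    rintro _ ⟨_, ⟨b, hb, rfl⟩, rfl⟩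
    refine SetLike.le_def.mp (Submodule.span_mono (Set.image_mono ?_))
      ((B (Q.tgt a)).mem_span_repr_support ((M.f a) (B (Q.src a) b)))
    intro c hc
    have hrel : coeffRel M B ⟨Q.src a, b⟩ ⟨Q.tgt a, c⟩ :=
      ⟨a, rfl, rfl, by simpa using hc⟩
    exact hS _ hb _ hrel

lemma spanRep_dim {k : Type} [Field k] {Q : QuiverData} [Fintype Q.Q0] {M : RepOf k Q}
    {ι : Q.Q0 → Type} [∀ q, Fintype (ι q)]
    (B : ∀ q, Module.Basis (ι q) k (M.V q)) (S : Set (Σ q, ι q))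
    (hS : ∀ x ∈ S, ∀ y, coeffRel M B x y → y ∈ S) :
    subDim (spanRep B S hS) = S.ncard := by
  rw [← sum_ncard_fiber S]
  exact Finset.sum_congr rfl fun q _ => finrank_span_basis_image (B q) (sFiber S q)

/-! ### Reachability sets -/

/-- Vertices admitting a directed walk of exactly `j` arrows into `X`. -/
def RSet {V : Type} (r : V → V → Prop) (X : Set V) : ℕ → Set V
  | 0 => X
  | (j+1) => {x | ∃ y ∈ RSet r X j, r x y}

lemma RSet_walk {V : Type} (r : V → V → Prop) {X : Set V} :
    ∀ j, ∀ v ∈ RSet r X j, ∃ w : Fin (j+1) → V,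
      w 0 = v ∧ (∀ m : Fin j, r (w m.castSucc) (w m.succ)) ∧ w (Fin.last j) ∈ X := by
  intro j
  induction j with
  | zero => exact fun v hv => ⟨fun _ => v, rfl, fun m => m.elim0, hv⟩
  | succ j ih =>
    rintro v ⟨y, hy, hr⟩
    obtain ⟨w, hw0, hws, hwl⟩ := ih y hy
    refine ⟨Fin.cons v w, Fin.cons_zero _ _, ?_, ?_⟩
    · intro m
      induction m using Fin.cases with
      | zero =>
        simpa [Fin.castSucc_zero, Fin.cons_zero, Fin.cons_succ, hw0] using hr
      | succ m' =>
        have h1 : (m'.succ).castSucc = (m'.castSucc).succ := (Fin.succ_castSucc m').symm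
        rw [h1, Fin.cons_succ, Fin.cons_succ]
        exact hws m'
    · rw [← Fin.succ_last, Fin.cons_succ]
      exact hwl

lemma RSet_ncard_le {V : Type} [Fintype V] (r : V → V → Prop) (X : Set V) (d : ℕ)
    (hd : ∀ y, {x | r x y}.ncard ≤ d) :
    ∀ j, (RSet r X j).ncard ≤ d ^ j * X.ncard := by
  intro j
  induction j with
  | zero => simp [RSet]
  | succ j ih =>
    have hsub : RSet r X (j+1) = ⋃ y ∈ RSet r X j, {x | r x y} := by
      ext x; simp [RSet]
    rw [hsub]
    calc (⋃ y ∈ RSet r X j, {x | r x y}).ncard ≤ d * (RSet r X j).ncard :=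
          ncard_biUnion_le' (Set.toFinite _) _ d hd
      _ ≤ d * (d ^ j * X.ncard) := Nat.mul_le_mul_left d ih
      _ = d ^ (j+1) * X.ncard := by ring

end Helpers

/-- The whole representation as a subrepresentation of itself. -/
def topSubRep {k : Type} [Field k] {Q : QuiverData} (M : RepOf k Q) : SubRep M :=
  ⟨fun _ => ⊤, fun _ => le_top⟩

lemma subDim_top {k : Type} [Field k] {Q : QuiverData} [Fintype Q.Q0] (M : RepOf k Q) :
    subDim (topSubRep M) = totalDim M :=
  Finset.sum_congr rfl fun q _ => finrank_top k (M.V q)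

lemma spanRep_U {k : Type} [Field k] {Q : QuiverData} {M : RepOf k Q} {ι : Q.Q0 → Type}
    (B : ∀ q, Module.Basis (ι q) k (M.V q)) (S : Set (Σ q, ι q))
    (hS : ∀ x ∈ S, ∀ y, coeffRel M B x y → y ∈ S) (q : Q.Q0) :
    (spanRep B S hS).U q = Submodule.span k (B q '' sFiber S q) := rfl


/-- Let `A = kQ/I` be finite dimensional and let `(Ms i)` be a class of
indecomposable modules (representations of `Q`), each with a chosen basis `Bs i`, such
that the indegree of every coefficient quiver is bounded by `d`, every directed path in
the coefficient quivers has length at most `ℓ`, and the class of underlying graphs of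
the coefficient quivers is fragmentable. Then the class is a hyperfinite family. -/
theorem stmt8 {k : Type} [Field k] {Q : QuiverData} [Fintype Q.Q0] [Fintype Q.Q1]
    {I : Type} (Ms : I → RepOf k Q) [∀ i q, FiniteDimensional k ((Ms i).V q)]
    {κ : I → Q.Q0 → Type} [∀ i q, Fintype (κ i q)]
    (Bs : ∀ i q, Module.Basis (κ i q) k ((Ms i).V q))
    (d ℓ : ℕ)
    (hindec : ∀ i, IsIndec (Ms i))
    (hdeg : ∀ i (y : Σ q, κ i q),
      {p : Q.Q1 × (Σ q, κ i q) | coeffRelA (Ms i) (Bs i) p.1 p.2 y}.ncard ≤ d)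
    (hpath : ∀ i (x : Fin (ℓ + 2) → Σ q, κ i q),
      ¬ ∀ j : Fin (ℓ + 1), coeffRel (Ms i) (Bs i) (x j.castSucc) (x j.succ))
    (hfrag : ∀ ε : ℝ, 0 < ε → ∃ n₀ C : ℕ, ∀ i,
      n₀ ≤ nonIsolated (coeffGraph (Ms i) (Bs i)) →
      ∃ X : Set (Σ q, κ i q),
        (X.ncard : ℝ) ≤ ε * (nonIsolated (coeffGraph (Ms i) (Bs i)) : ℝ) ∧
        ∀ c : ((coeffGraph (Ms i) (Bs i)).induce Xᶜ).ConnectedComponent,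
          c.supp.ncard ≤ C) :
    ∀ ε : ℝ, 0 < ε → ∃ L : ℕ, 0 < L ∧ ∀ i, ∃ N : SubRep (Ms i),
      (1 - ε) * (totalDim (Ms i) : ℝ) ≤ (subDim N : ℝ) ∧
      ∃ (t : ℕ) (P : Fin t → SubRep (Ms i)),
        (∀ j q, (P j).U q ≤ N.U q) ∧
        (∀ q, (⨆ j, (P j).U q) = N.U q) ∧
        (∀ q, iSupIndep fun j => (P j).U q) ∧
        ∀ j, subDim (P j) ≤ L := by
  classical
  intro ε hε
  set D : ℕ := ∑ j ∈ Finset.range (ℓ + 1), d ^ j with hDdef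
  have hD1 : 1 ≤ D := by
    calc 1 = d ^ 0 := (pow_zero d).symm
      _ ≤ D := Finset.single_le_sum (f := fun j => d ^ j) (fun _ _ => Nat.zero_le _)
          (Finset.mem_range.mpr (Nat.succ_pos ℓ))
  have hDpos : (0:ℝ) < (D:ℝ) := by exact_mod_cast hD1
  obtain ⟨n₀, C, hfc⟩ := hfrag (ε / (D:ℝ)) (div_pos hε hDpos)
  set L : ℕ := max (max C n₀) 1 with hL
  have hCL : C ≤ L := le_trans (le_max_left C n₀) (le_max_left _ 1)
  have hn₀L : n₀ ≤ L := le_trans (le_max_right C n₀) (le_max_left _ 1)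
  have h1L : 1 ≤ L := le_max_right _ 1
  refine ⟨L, lt_of_lt_of_le one_pos h1L, fun i => ?_⟩
  have hcard : totalDim (Ms i) = Fintype.card (Σ q, κ i q) := by
    rw [Fintype.card_sigma]
    exact Finset.sum_congr rfl fun q _ => Module.finrank_eq_card_basis (Bs i q)
  by_cases hsmall : totalDim (Ms i) ≤ L
  · refine ⟨topSubRep (Ms i), ?_, 1, fun _ => topSubRep (Ms i), fun _ _ => le_rfl,
      fun q => ?_, fun q => ?_, fun _ => ?_⟩
    · have h0 : (0:ℝ) ≤ (totalDim (Ms i) : ℝ) := Nat.cast_nonneg _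
      rw [subDim_top]
      nlinarith [mul_nonneg hε.le h0]
    · exact le_antisymm (iSup_le fun _ => le_rfl) (le_iSup (fun _ : Fin 1 => (⊤ : Submodule k ((Ms i).V q))) 0)
    · rw [iSupIndep_def]
      intro j
      have hb : (⨆ (j' : Fin 1) (_ : j' ≠ j), (topSubRep (Ms i)).U q) = ⊥ :=
        le_bot_iff.mp (iSup_le fun j' => iSup_le fun hj' =>
          absurd (Subsingleton.elim j' j) hj')
      rw [hb]
      exact disjoint_bot_right
    · rw [subDim_top]; exact hsmall
  · push_neg at hsmall
    have hT1 : 1 < totalDim (Ms i) := lt_of_le_of_lt h1L hsmall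
    set G := coeffGraph (Ms i) (Bs i) with hG
    have hniso : ∀ v : Σ q, κ i q, ∃ w, G.Adj v w := by
      intro v0
      by_contra hiso
      push_neg at hiso
      have hcard2 : 1 < Fintype.card (Σ q, κ i q) := hcard ▸ hT1
      obtain ⟨u, hu⟩ := Fintype.exists_ne_of_one_lt_card hcard2 v0
      have hc1 : ∀ x ∈ ({v0} : Set (Σ q, κ i q)), ∀ y,
          coeffRel (Ms i) (Bs i) x y → y ∈ ({v0} : Set (Σ q, κ i q)) := by
        intro x hx y hr
        rw [Set.mem_singleton_iff] at hx
        subst hx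
        rw [Set.mem_singleton_iff]
        by_contra hne
        exact hiso y ⟨fun h => hne h.symm, Or.inl hr⟩
      have hc2 : ∀ x ∈ (({v0} : Set (Σ q, κ i q))ᶜ), ∀ y,
          coeffRel (Ms i) (Bs i) x y → y ∈ (({v0} : Set (Σ q, κ i q))ᶜ) := by
        intro x hx y hr
        rw [Set.mem_compl_iff, Set.mem_singleton_iff] at hx ⊢
        intro hy
        subst hy
        exact hiso x (SimpleGraph.Adj.symm ⟨hx, Or.inl hr⟩)
      have hcompl : ∀ q, IsCompl ((spanRep (Bs i) {v0} hc1).U q)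
          ((spanRep (Bs i) ({v0}ᶜ) hc2).U q) := by
        intro q
        have h' : sFiber (({v0} : Set (Σ q, κ i q))ᶜ) q = (sFiber ({v0} : Set (Σ q, κ i q)) q)ᶜ := rfl
        rw [spanRep_U, spanRep_U, h']
        exact isCompl_span_basis (Bs i q) _
      rcases (hindec i).2 _ _ hcompl with h | h
      · have hmem : v0.2 ∈ sFiber ({v0} : Set (Σ q, κ i q)) v0.1 :=
          Set.mem_singleton_iff.mpr (Sigma.eta v0)
        have hm : (Bs i v0.1) v0.2 ∈ (spanRep (Bs i) {v0} hc1).U v0.1 :=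
          Submodule.subset_span (Set.mem_image_of_mem _ hmem)
        rw [h v0.1, Submodule.mem_bot] at hm
        exact (Bs i v0.1).ne_zero v0.2 hm
      · have hmem : u.2 ∈ sFiber (({v0} : Set (Σ q, κ i q))ᶜ) u.1 := by
          intro hh
          exact hu (by rwa [Set.mem_singleton_iff, Sigma.eta] at hh)
        have hm : (Bs i u.1) u.2 ∈ (spanRep (Bs i) ({v0}ᶜ) hc2).U u.1 :=
          Submodule.subset_span (Set.mem_image_of_mem _ hmem)
        rw [h u.1, Submodule.mem_bot] at hm
        exact (Bs i u.1).ne_zero u.2 hm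
    have hn : nonIsolated G = totalDim (Ms i) := by
      have huniv : {v : Σ q, κ i q | ∃ w, G.Adj v w} = Set.univ :=
        Set.eq_univ_of_forall hniso
      unfold nonIsolated
      rw [huniv, Set.ncard_univ, Nat.card_eq_fintype_card, hcard]
    obtain ⟨X, hX, hcomp⟩ := hfc i (by rw [hn]; omega)
    set r : (Σ q, κ i q) → (Σ q, κ i q) → Prop := coeffRel (Ms i) (Bs i) with hr
    have hRempty : RSet r X (ℓ+1) = ∅ := by
      ext v
      simp only [Set.mem_empty_iff_false, iff_false]
      intro hv
      obtain ⟨w, -, hws, -⟩ := RSet_walk r (ℓ+1) v hv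
      exact hpath i w hws
    set Rch : Set (Σ q, κ i q) := ⋃ j ∈ Finset.range (ℓ+1), RSet r X j with hRchdef
    have hXR : X ⊆ Rch := fun x hx =>
      Set.mem_iUnion₂.mpr ⟨0, Finset.mem_range.mpr (Nat.succ_pos ℓ), hx⟩
    have hclosed : ∀ x ∈ Rchᶜ, ∀ y, coeffRel (Ms i) (Bs i) x y → y ∈ Rchᶜ := by
      intro x hx y hrel
      rw [Set.mem_compl_iff]
      intro hy
      obtain ⟨j, hj, hyj⟩ := Set.mem_iUnion₂.mp hy
      have hx' : x ∈ RSet r X (j+1) := ⟨y, hyj, hrel⟩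
      rw [Finset.mem_range] at hj
      rcases Nat.lt_succ_iff_lt_or_eq.mp hj with hlt | rfl
      · exact hx (Set.mem_iUnion₂.mpr ⟨j+1, Finset.mem_range.mpr (Nat.succ_lt_succ hlt), hx'⟩)
      · rw [hRempty] at hx'
        exact hx'
    have hpred : ∀ y, {x | r x y}.ncard ≤ d := by
      intro y
      have himg : {x | r x y}
          = Prod.snd '' {p : Q.Q1 × (Σ q, κ i q) | coeffRelA (Ms i) (Bs i) p.1 p.2 y} := by
        ext x
        simp only [Set.mem_setOf_eq, Set.mem_image, Prod.exists]
        constructor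
        · rintro ⟨a, ha⟩; exact ⟨a, x, ha, rfl⟩
        · rintro ⟨a, x', h, rfl⟩; exact ⟨a, h⟩
      rw [himg]
      exact le_trans (Set.ncard_image_le (Set.toFinite _)) (hdeg i y)
    have hRchcard : Rch.ncard ≤ D * X.ncard := by
      have key : ∀ m, (⋃ j ∈ Finset.range m, RSet r X j).ncard
          ≤ (∑ j ∈ Finset.range m, d ^ j) * X.ncard := by
        intro m
        induction m with
        | zero => simp
        | succ m ih =>
          rw [Finset.range_add_one, Finset.set_biUnion_insert,
            Finset.sum_insert Finset.notMem_range_self, add_mul]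
          exact le_trans (Set.ncard_union_le _ _)
            (Nat.add_le_add (RSet_ncard_le r X d hpred m) ih)
      exact key (ℓ+1)
    set S : Set (Σ q, κ i q) := Rchᶜ with hSdef
    refine ⟨spanRep (Bs i) S hclosed, ?_, ?_⟩
    · rw [spanRep_dim]
      have h1 : Rch.ncard + S.ncard = totalDim (Ms i) := by
        rw [hcard, ← Nat.card_eq_fintype_card]
        exact Set.ncard_add_ncard_compl Rch
      have h2 : (Rch.ncard : ℝ) ≤ ε * totalDim (Ms i) := by
        calc (Rch.ncard : ℝ) ≤ ((D * X.ncard : ℕ) : ℝ) := by exact_mod_cast hRchcard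
          _ = (D:ℝ) * (X.ncard : ℝ) := by push_cast; ring
          _ ≤ (D:ℝ) * (ε / (D:ℝ) * (nonIsolated G : ℝ)) := by
              exact mul_le_mul_of_nonneg_left hX (le_of_lt hDpos)
          _ = ε * (nonIsolated G : ℝ) := by
              rw [← mul_assoc, mul_comm (D:ℝ) (ε / (D:ℝ)), div_mul_cancel₀ ε (ne_of_gt hDpos)]
          _ = ε * totalDim (Ms i) := by rw [hn]
      have h3 : (S.ncard : ℝ) = (totalDim (Ms i) : ℝ) - (Rch.ncard : ℝ) := by
        have := congrArg (fun n : ℕ => (n : ℝ)) h1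
        push_cast at this
        linarith
      rw [h3]
      linarith
    · set Gs := G.induce S with hGs
      haveI : Fintype Gs.ConnectedComponent := Fintype.ofFinite _
      set e : Fin (Fintype.card Gs.ConnectedComponent) ≃ Gs.ConnectedComponent :=
        (Fintype.equivFin Gs.ConnectedComponent).symm with he
      set Sc : Gs.ConnectedComponent → Set (Σ q, κ i q) :=
        fun c => Subtype.val '' c.supp with hSc
      have hScS : ∀ c, Sc c ⊆ S := by
        rintro c _ ⟨x', _, rfl⟩
        exact x'.2
      have hScClosed : ∀ c, ∀ x ∈ Sc c, ∀ y, coeffRel (Ms i) (Bs i) x y → y ∈ Sc c := by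
        rintro c _ ⟨x', hx', rfl⟩ y hrel
        have hyS : y ∈ S := hclosed _ x'.2 y hrel
        by_cases hxy : (x' : Σ q, κ i q) = y
        · exact ⟨x', hx', hxy⟩
        · refine ⟨⟨y, hyS⟩, ?_, rfl⟩
          rw [SimpleGraph.ConnectedComponent.mem_supp_iff] at hx' ⊢
          rw [← hx']
          apply SimpleGraph.ConnectedComponent.connectedComponentMk_eq_of_adj
          exact SimpleGraph.Adj.symm (⟨hxy, Or.inl hrel⟩ : G.Adj (x' : Σ q, κ i q) y)
      have hSX : Set.MapsTo id S Xᶜ := by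
        intro x hx hX'
        exact hx (hXR hX')
      let φ : Gs →g G.induce Xᶜ := SimpleGraph.induceHom SimpleGraph.Hom.id hSX
      have hφinj : Function.Injective φ := by
        intro a b h
        have hvv : ((φ a : ↥Xᶜ) : Σ q, κ i q) = ((φ b : ↥Xᶜ) : Σ q, κ i q) :=
          congrArg Subtype.val h
        exact Subtype.ext hvv
      have hcompS : ∀ c : Gs.ConnectedComponent, (Sc c).ncard ≤ C := by
        intro c
        have h1 : (Sc c).ncard = c.supp.ncard :=
          Set.ncard_image_of_injective _ Subtype.val_injective
        rw [h1]
        induction c using SimpleGraph.ConnectedComponent.ind with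
        | _ x =>
          set c' := (G.induce Xᶜ).connectedComponentMk (φ x) with hc'
          have himg : φ '' (Gs.connectedComponentMk x).supp ⊆ c'.supp := by
            rintro _ ⟨y, hy, rfl⟩
            rw [SimpleGraph.ConnectedComponent.mem_supp_iff] at hy ⊢
            exact SimpleGraph.ConnectedComponent.sound
              ((SimpleGraph.ConnectedComponent.exact hy).map φ)
          calc (Gs.connectedComponentMk x).supp.ncard
              = (φ '' (Gs.connectedComponentMk x).supp).ncard :=
                (Set.ncard_image_of_injective _ hφinj).symm
            _ ≤ c'.supp.ncard := Set.ncard_le_ncard himg (Set.toFinite _)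
            _ ≤ C := hcomp c'
      refine ⟨Fintype.card Gs.ConnectedComponent,
        fun j => spanRep (Bs i) (Sc (e j)) (hScClosed (e j)), ?_, ?_, ?_, ?_⟩
      · intro j q
        rw [spanRep_U, spanRep_U]
        exact Submodule.span_mono (Set.image_mono (fun b hb => hScS (e j) hb))
      · intro q
        have hunion : (⋃ c : Gs.ConnectedComponent, sFiber (Sc c) q) = sFiber S q := by
          ext b
          simp only [Set.mem_iUnion]
          constructor
          · rintro ⟨c, hc⟩
            exact hScS c hc
          · intro hb
            exact ⟨Gs.connectedComponentMk ⟨⟨q, b⟩, hb⟩, ⟨⟨q, b⟩, hb⟩, rfl, rfl⟩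
        show (⨆ j, Submodule.span k ((Bs i q) '' sFiber (Sc (e j)) q))
            = Submodule.span k ((Bs i q) '' sFiber S q)
        rw [Function.Surjective.iSup_comp e.surjective
          (fun c => Submodule.span k ((Bs i q) '' sFiber (Sc c) q)), ← hunion,
          Set.image_iUnion, Submodule.span_iUnion]
      · intro q
        have hdisj : ∀ c c' : Gs.ConnectedComponent, c ≠ c' →
            Disjoint (sFiber (Sc c) q) (sFiber (Sc c') q) := by
          intro c c' hne
          rw [Set.disjoint_left]
          rintro b ⟨x', hx', hval⟩ ⟨y', hy', hval'⟩
          apply hne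
          have hxy : x' = y' := Subtype.ext (by rw [hval, hval'])
          rw [SimpleGraph.ConnectedComponent.mem_supp_iff] at hx' hy'
          rw [← hx', hxy, hy']
        exact (iSupIndep_span_basis (Bs i q) (fun c => sFiber (Sc c) q) hdisj).comp e.injective
      · intro j
        rw [spanRep_dim]
        exact le_trans (hcompS (e j)) hCL
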